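/- For every frame L there exist a complete Boolean algebra M and an interior operator □ on M such that the poset O(M) of open elements of the MT-algebra (M, □), with the order inherited from M, is order-isomorphic to L. (That is, the assignment (M, □) ↦ O(M) from MT-algebras to frames is essentially surjective.) -/

import Mathlib

universe u

/-- An MT-algebra: a complete Boolean algebra equipped with an interior operator. -/
structure MTAlg (M : Type u) [CompleteBooleanAlgebra M] where
  box : M → M
  box_top : box ⊤ = ⊤
  box_inf : ∀ a b : M, box (a ⊓ b) = box a ⊓ box b
  box_le : ∀ a : M, box a ≤ a
  box_idem : ∀ a : M, box a ≤ box (box a)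

namespace MTAlg

variable {M : Type u} [CompleteBooleanAlgebra M] (T : MTAlg M)

/-- The closure operator `◇a = (□(aᶜ))ᶜ`. -/
def dia (a : M) : M := (T.box aᶜ)ᶜ

/-- An element is open if `□a = a`. -/
def IsOp (a : M) : Prop := T.box a = a

/-- An element is closed if `◇a = a`. -/
def IsCl (a : M) : Prop := T.dia a = a

/-- The set `O(M)` of open elements. -/
def opens : Set M := {a | T.IsOp a}

/-- The set `C(M)` of closed elements. -/
def closeds : Set M := {a | T.IsCl a}

/-- A subset join-generates `M` if every element of `M` is a supremum of a subset of it. -/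
def JoinGenerates (S : Set M) : Prop := ∀ a : M, ∃ B ⊆ S, a = sSup B

theorem box_mono {a b : M} (h : a ≤ b) : T.box a ≤ T.box b := by
  have hab : a ⊓ b = a := inf_eq_left.mpr h
  calc T.box a = T.box (a ⊓ b) := by rw [hab]
    _ = T.box a ⊓ T.box b := T.box_inf a b
    _ ≤ T.box b := inf_le_right

theorem isOp_sSup {S : Set M} (h : ∀ a ∈ S, T.IsOp a) : T.IsOp (sSup S) := by
  refine le_antisymm (T.box_le _) (sSup_le fun a ha => ?_)
  calc a = T.box a := (h a ha).symm
    _ ≤ T.box (sSup S) := T.box_mono (le_sSup ha)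

theorem atom_le_sSup {x : M} (hx : IsAtom x) {S : Set M} (h : x ≤ sSup S) :
    ∃ s ∈ S, x ≤ s := by
  by_contra hc
  push_neg at hc
  have h2 : ∀ b ∈ S, x ⊓ b = ⊥ := by
    intro b hb
    rcases hx.le_iff.mp (inf_le_left : x ⊓ b ≤ x) with h' | h'
    · exact h'
    · exact absurd (h' ▸ inf_le_right) (hc b hb)
  have h3 : x ⊓ sSup S = ⊥ := by
    rw [inf_sSup_eq]
    simp only [iSup_eq_bot]
    intro b hb
    exact h2 b hb
  have hx' : x = ⊥ := by
    rw [inf_eq_left.mpr h] at h3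
    exact h3
  exact hx.1 hx'

/-- `η(a)` : the set of atoms below `a`. -/
def eta (a : M) : Set {x : M // IsAtom x} := {x | (x : M) ≤ a}

/-- The topology `τ = {η(a) | a ∈ O(M)}` on the set of atoms of `M`. -/
def atomTopology : TopologicalSpace {x : M // IsAtom x} where
  IsOpen U := ∃ a : M, T.IsOp a ∧ U = eta a
  isOpen_univ := ⟨⊤, T.box_top, by ext x; simp [eta]⟩
  isOpen_inter := by
    rintro U V ⟨a, ha, rfl⟩ ⟨b, hb, rfl⟩
    refine ⟨a ⊓ b, ?_, ?_⟩
    · show T.box (a ⊓ b) = a ⊓ b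
      rw [T.box_inf, ha, hb]
    · ext x
      simp [eta, le_inf_iff]
  isOpen_sUnion := by
    intro C hC
    refine ⟨sSup {a | T.IsOp a ∧ eta a ∈ C}, T.isOp_sSup (fun a ha => ha.1), ?_⟩
    ext x
    constructor
    · rintro ⟨U, hU, hxU⟩
      obtain ⟨a, ha, rfl⟩ := hC U hU
      exact le_trans hxU (le_sSup ⟨ha, hU⟩)
    · intro hx
      obtain ⟨s, hs, hxs⟩ := atom_le_sSup x.2 hx
      exact ⟨eta s, hs.2, hxs⟩

/-- A completely prime filter of the frame `O(M)` (with arbitrary suprema computed in `M`). -/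
structure IsCPF (p : Set M) : Prop where
  subset_opens : p ⊆ T.opens
  top_mem : ⊤ ∈ p
  bot_notMem : ⊥ ∉ p
  mem_of_le : ∀ a ∈ p, ∀ b ∈ T.opens, a ≤ b → b ∈ p
  inf_mem : ∀ a ∈ p, ∀ b ∈ p, a ⊓ b ∈ p
  prime : ∀ S ⊆ T.opens, sSup S ∈ p → ∃ s ∈ S, s ∈ p

/-- The underlying set of `θ(x) = {a ∈ O(M) | x ≤ a}`. -/
def thetaSet (x : M) : Set M := {a | T.IsOp a ∧ x ≤ a}

/-- An element is saturated if it is an infimum of a set of open elements. -/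
def IsSat (a : M) : Prop := ∃ S ⊆ T.opens, a = sInf S

/-- Weakly locally closed: the infimum of a saturated element and a closed element. -/
def IsWLC (a : M) : Prop := ∃ s c : M, T.IsSat s ∧ T.IsCl c ∧ a = s ⊓ c

/-- Locally closed: the infimum of an open element and a closed element. -/
def IsLC (a : M) : Prop := ∃ u c : M, T.IsOp u ∧ T.IsCl c ∧ a = u ⊓ c

/-- `M` is a `T₀`-algebra if the weakly locally closed elements join-generate `M`. -/
def T0 : Prop := JoinGenerates {a | T.IsWLC a}

/-- `M` is a `T_{1/2}`-algebra if the locally closed elements join-generate `M`. -/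
def THalf : Prop := JoinGenerates {a | T.IsLC a}

/-- `M` is a `T₁`-algebra if the closed elements join-generate `M`. -/
def T1 : Prop := JoinGenerates T.closeds

/-- A join-irreducible element of `C(M)`. -/
def JoinIrred (p : M) : Prop :=
  T.IsCl p ∧ p ≠ ⊥ ∧ ∀ a b : M, T.IsCl a → T.IsCl b → p = a ⊔ b → p = a ∨ p = b

/-- `M` is weakly sober if every join-irreducible element of `C(M)` is `◇x` for some atom `x`. -/
def WeaklySober : Prop := ∀ p : M, T.JoinIrred p → ∃ x : M, IsAtom x ∧ p = T.dia x

/-- `M` is sober if it is weakly sober and a `T₀`-algebra. -/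
def Sober : Prop := T.WeaklySober ∧ T.T0

/-- `a ∈ GC(M)` : `a` is approximated from above by regular closed elements. -/
def IsGC (a : M) : Prop := a = sInf {b | ∃ c : M, a ≤ T.box c ∧ b = T.dia (T.box c)}

/-- `M` is a Hausdorff (T₂) algebra if `GC(M)` join-generates `M`. -/
def Hausdorff : Prop := JoinGenerates {a | T.IsGC a}

/-- `a ◁ b` iff `◇a ≤ □b`. -/
def tri (a b : M) : Prop := T.dia a ≤ T.box b

/-- `M` is a regular (T₃) algebra. -/
def Regular : Prop :=
  T.T1 ∧ ∀ a : M, T.IsOp a → a = sSup {b | T.IsOp b ∧ T.tri b a}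

/-- `a ◁◁ b` : there is a family `(c_p)` indexed by `p ∈ ℚ ∩ [0,1]` interpolating
between `a` and `b` with `c_p ◁ c_q` whenever `p < q`. -/
def triQ (a b : M) : Prop :=
  ∃ c : ℚ → M, a ≤ c 0 ∧ c 1 ≤ b ∧
    ∀ p q : ℚ, 0 ≤ p → p < q → q ≤ 1 → T.tri (c p) (c q)

/-- `M` is a completely regular (T₃½) algebra. -/
def CompletelyRegular : Prop :=
  T.T1 ∧ ∀ a : M, T.IsOp a → a = sSup {b | T.IsOp b ∧ T.triQ b a}

/-- The pseudocomplement of `b` in the frame `O(M)`. -/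
def pstarO (b : M) : M := sSup {u | T.IsOp u ∧ u ⊓ b = ⊥}

/-- The rather-below relation `b ≺ a` in the frame `O(M)`. -/
def precO (b a : M) : Prop := T.pstarO b ⊔ a = ⊤

/-- The completely-below relation `b ≺≺ a` in the frame `O(M)`. -/
def precQO (b a : M) : Prop :=
  ∃ c : ℚ → M, (∀ p : ℚ, 0 ≤ p → p ≤ 1 → T.IsOp (c p)) ∧ b ≤ c 0 ∧ c 1 ≤ a ∧
    ∀ p q : ℚ, 0 ≤ p → p < q → q ≤ 1 → T.precO (c p) (c q)

/-- The frame `O(M)` is completely regular. -/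
def FrameCompletelyRegular : Prop :=
  ∀ a : M, T.IsOp a → a = sSup {b | T.IsOp b ∧ T.precQO b a}

/-- `M` is a normal (T₄) algebra. -/
def Normal : Prop :=
  T.T1 ∧ ∀ c d : M, T.IsCl c → T.IsCl d → c ⊓ d = ⊥ →
    ∃ a b : M, T.IsOp a ∧ T.IsOp b ∧ a ⊓ b = ⊥ ∧ c ≤ a ∧ d ≤ b

end MTAlg


/-- The frame `L` is realized by the MT-algebra `(M, □)`: the poset of open elements of
`M`, with the order inherited from `M`, is order-isomorphic to `L`. -/
def RealizesFrame (L : Type u) [Order.Frame L] (M : Type u) [CompleteBooleanAlgebra M]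
    (T : MTAlg M) : Prop :=
  Nonempty (L ≃o {a : M // T.IsOp a})

namespace Funayama

variable {L : Type u} [Order.Frame L]

structure IsPF (F : Set L) : Prop where
  top_mem : ⊤ ∈ F
  bot_notMem : ⊥ ∉ F
  up : ∀ a ∈ F, ∀ b, a ≤ b → b ∈ F
  inf_mem : ∀ a ∈ F, ∀ b ∈ F, a ⊓ b ∈ F
  prime : ∀ a b : L, a ⊔ b ∈ F → a ∈ F ∨ b ∈ F

/-- Birkhoff prime filter separation theorem. -/
theorem exists_pf {a b : L} (hab : ¬ a ≤ b) :
    ∃ F : Set L, IsPF F ∧ a ∈ F ∧ b ∉ F := by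
  classical
  set S : Set (Set L) :=
    {I | b ∈ I ∧ a ∉ I ∧ (∀ x ∈ I, ∀ y : L, y ≤ x → y ∈ I) ∧
      (∀ x ∈ I, ∀ y ∈ I, x ⊔ y ∈ I)} with hS
  have hdown : {x : L | x ≤ b} ∈ S := by
    refine ⟨le_rfl, hab, fun x hx y hy => le_trans hy hx, fun x hx y hy => sup_le hx hy⟩
  obtain ⟨M, -, hM⟩ := zorn_subset_nonempty S (fun c hcS hc hcne => by
    obtain ⟨I0, hI0⟩ := hcne
    refine ⟨⋃₀ c, ⟨⟨I0, hI0, (hcS hI0).1⟩, ?_, ?_, ?_⟩, fun s hs => Set.subset_sUnion_of_mem hs⟩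
    · rintro ⟨I, hI, haI⟩; exact (hcS hI).2.1 haI
    · rintro x ⟨I, hI, hxI⟩ y hy; exact ⟨I, hI, (hcS hI).2.2.1 x hxI y hy⟩
    · rintro x ⟨I, hI, hxI⟩ y ⟨J, hJ, hyJ⟩
      rcases hc.total hI hJ with h | h
      · exact ⟨J, hJ, (hcS hJ).2.2.2 x (h hxI) y hyJ⟩
      · exact ⟨I, hI, (hcS hI).2.2.2 x hxI y (h hyJ)⟩) _ hdown
  obtain ⟨⟨hbM, haM, hMdown, hMsup⟩, hmax⟩ := hM
  refine ⟨Mᶜ, ?_, haM, fun hbc => hbc hbM⟩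
  have key : ∀ x : L, x ∉ M → ∃ m ∈ M, a ≤ m ⊔ x := by
    intro x hx
    by_contra hcon
    push_neg at hcon
    have hJ : {z : L | ∃ m ∈ M, z ≤ m ⊔ x} ∈ S := by
      refine ⟨⟨b, hbM, le_sup_left⟩, ?_, ?_, ?_⟩
      · rintro ⟨m, hm, hle⟩; exact hcon m hm hle
      · rintro z ⟨m, hm, hz⟩ y hy; exact ⟨m, hm, le_trans hy hz⟩
      · rintro z ⟨m, hm, hz⟩ y ⟨m', hm', hy⟩
        exact ⟨m ⊔ m', hMsup m hm m' hm',
          sup_le (hz.trans (sup_le_sup_right le_sup_left x))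
            (hy.trans (sup_le_sup_right le_sup_right x))⟩
    have hsub : M ⊆ {z : L | ∃ m ∈ M, z ≤ m ⊔ x} := fun m hm => ⟨m, hm, le_sup_left⟩
    have := hmax hJ hsub
    exact hx (this ⟨b, hbM, le_sup_right⟩)
  constructor
  · -- top_mem
    intro htop
    exact haM (hMdown ⊤ htop a le_top)
  · -- bot_notMem
    intro hbot
    exact hbot (hMdown b hbM ⊥ bot_le)
  · -- up
    intro x hx y hxy hyM
    exact hx (hMdown y hyM x hxy)
  · -- inf closed
    intro x hx y hy
    intro hxyM
    obtain ⟨m1, hm1, h1⟩ := key x hx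
    obtain ⟨m2, hm2, h2⟩ := key y hy
    have : a ≤ (m1 ⊔ m2) ⊔ (x ⊓ y) := by
      have := le_inf h1 h2
      calc a ≤ (m1 ⊔ x) ⊓ (m2 ⊔ y) := this
        _ ≤ (m1 ⊔ m2) ⊔ (x ⊓ y) := by
          rw [inf_sup_left, inf_sup_right, inf_sup_right]
          refine sup_le (sup_le ?_ ?_) (sup_le ?_ ?_)
          · exact inf_le_left.trans (le_sup_of_le_left le_sup_left)
          · exact inf_le_right.trans (le_sup_of_le_left le_sup_right)
          · exact inf_le_left.trans (le_sup_of_le_left le_sup_left)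
          · exact le_sup_right
    have hmem : (m1 ⊔ m2) ⊔ (x ⊓ y) ∈ M :=
      hMsup _ (hMsup m1 hm1 m2 hm2) _ hxyM
    exact haM (hMdown _ hmem a this)
  · -- prime
    intro x y hxy
    by_contra hcon
    push_neg at hcon
    simp only [Set.mem_compl_iff, not_not] at hcon
    exact hxy (hMsup x hcon.1 y hcon.2)



variable (L) in
def X : Type u := {F : Set L // IsPF F}

variable (L) in
def sigma (a : L) : Set (X L) := {F | a ∈ F.1}

theorem sigma_mono {a b : L} (h : a ≤ b) : sigma L a ⊆ sigma L b :=
  fun F hF => F.2.up a hF b h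

theorem sigma_le {a b : L} (h : sigma L a ⊆ sigma L b) : a ≤ b := by
  by_contra hab
  obtain ⟨F, hF, haF, hbF⟩ := exists_pf hab
  have hmem : (⟨F, hF⟩ : X L) ∈ sigma L a := haF
  exact hbF (h hmem)

theorem sigma_inf (a b : L) : sigma L (a ⊓ b) = sigma L a ∩ sigma L b := by
  ext F
  exact ⟨fun h => ⟨F.2.up _ h _ inf_le_left, F.2.up _ h _ inf_le_right⟩,
    fun ⟨h1, h2⟩ => F.2.inf_mem _ h1 _ h2⟩

theorem sigma_top : sigma L ⊤ = Set.univ :=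
  Set.eq_univ_of_forall fun F => F.2.top_mem

theorem sigma_bot : sigma L ⊥ = ∅ :=
  Set.eq_empty_of_forall_notMem fun F hF => F.2.bot_notMem hF

theorem sigma_sup (a b : L) : sigma L (a ⊔ b) = sigma L a ∪ sigma L b := by
  ext F
  constructor
  · intro h; exact F.2.prime a b h
  · rintro (h | h)
    · exact F.2.up a h _ le_sup_left
    · exact F.2.up b h _ le_sup_right

/-- `σ` of a finite join of a list. -/
theorem sigma_foldr (l : List L) :
    sigma L (l.foldr (· ⊔ ·) ⊥) = ⋃ y ∈ l, sigma L y := by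
  induction l with
  | nil => simp [sigma_bot]
  | cons x l ih => simp [sigma_sup, ih]

/-- A cube: `σ x ∩ ⋂_{y ∈ ys} (σ y)ᶜ`. -/
def Kube (p : L × List L) : Set (X L) :=
  sigma L p.1 ∩ ⋂ y ∈ p.2, (sigma L y)ᶜ

variable (L) in
/-- The Boolean subalgebra of `Set (X L)` generated by the image of `σ`:
finite unions of cubes. -/
def B : Set (Set (X L)) := {b | ∃ l : List (L × List L), b = ⋃ p ∈ l, Kube p}

theorem sigma_mem_B (a : L) : sigma L a ∈ B L := by
  refine ⟨[(a, [])], ?_⟩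
  simp [Kube]

theorem empty_mem_B : (∅ : Set (X L)) ∈ B L := ⟨[], by simp⟩

theorem univ_mem_B : (Set.univ : Set (X L)) ∈ B L := by
  rw [← sigma_top]; exact sigma_mem_B ⊤

theorem union_mem_B {b c : Set (X L)} (hb : b ∈ B L) (hc : c ∈ B L) :
    b ∪ c ∈ B L := by
  obtain ⟨l, rfl⟩ := hb
  obtain ⟨m, rfl⟩ := hc
  refine ⟨l ++ m, ?_⟩
  induction l with
  | nil => simp
  | cons p l ih => simp only [List.cons_append] at ih ⊢; simp [ih, Set.union_assoc]

theorem Kube_inter (p q : L × List L) :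
    Kube p ∩ Kube q = Kube (L := L) (p.1 ⊓ q.1, p.2 ++ q.2) := by
  ext F
  simp only [Kube, sigma_inf, Set.mem_inter_iff, Set.mem_iInter, List.mem_append,
    Set.mem_compl_iff]
  constructor
  · rintro ⟨⟨h1, h2⟩, ⟨h3, h4⟩⟩
    exact ⟨⟨h1, h3⟩, by rintro y (hy | hy); exacts [h2 y hy, h4 y hy]⟩
  · rintro ⟨⟨h1, h3⟩, h⟩
    exact ⟨⟨h1, fun y hy => h y (Or.inl hy)⟩, ⟨h3, fun y hy => h y (Or.inr hy)⟩⟩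

theorem inter_mem_B {b c : Set (X L)} (hb : b ∈ B L) (hc : c ∈ B L) :
    b ∩ c ∈ B L := by
  obtain ⟨l, rfl⟩ := hb
  obtain ⟨m, rfl⟩ := hc
  refine ⟨l.flatMap (fun p => m.map fun q => (p.1 ⊓ q.1, p.2 ++ q.2)), ?_⟩
  ext F
  simp only [Set.mem_inter_iff, Set.mem_iUnion, List.mem_flatMap, List.mem_map, exists_prop]
  constructor
  · rintro ⟨⟨p, hp, hFp⟩, ⟨q, hq, hFq⟩⟩
    refine ⟨(p.1 ⊓ q.1, p.2 ++ q.2), ⟨p, hp, q, hq, rfl⟩, ?_⟩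
    rw [← Kube_inter]; exact ⟨hFp, hFq⟩
  · rintro ⟨r, ⟨p, hp, q, hq, rfl⟩, hFr⟩
    rw [← Kube_inter] at hFr
    exact ⟨⟨p, hp, hFr.1⟩, ⟨q, hq, hFr.2⟩⟩

theorem Kube_compl (p : L × List L) :
    (Kube (L := L) p)ᶜ ∈ B L := by
  refine ⟨(⊤, [p.1]) :: p.2.map (fun y => (y, [])), ?_⟩
  ext F
  simp only [Kube, Set.mem_compl_iff, Set.mem_inter_iff, Set.mem_iInter, not_and, not_forall,
    Set.mem_iUnion, List.mem_cons, List.mem_map, exists_prop]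
  constructor
  · intro h
    by_cases hF : F ∈ sigma L p.1
    · obtain ⟨y, hy, hyF⟩ := h hF
      simp only [Set.mem_compl_iff, not_not] at hyF
      refine ⟨(y, []), Or.inr ⟨y, hy, rfl⟩, ?_⟩
      simp [Kube, hyF]
    · refine ⟨(⊤, [p.1]), Or.inl rfl, ?_⟩
      simp [Kube, sigma_top, hF]
  · rintro ⟨q, (rfl | ⟨y, hy, rfl⟩), hFq⟩
    · intro hF
      simp [Kube, sigma_top] at hFq
      exact absurd hF hFq
    · intro _
      simp only [Kube, sigma_top, Set.mem_inter_iff] at hFq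
      exact ⟨y, hy, by simpa using hFq.1⟩

theorem compl_mem_B {b : Set (X L)} (hb : b ∈ B L) : bᶜ ∈ B L := by
  obtain ⟨l, rfl⟩ := hb
  induction l with
  | nil => simpa using univ_mem_B
  | cons p l ih =>
    have : (⋃ q ∈ p :: l, Kube (L := L) q)ᶜ = (Kube p)ᶜ ∩ (⋃ q ∈ l, Kube q)ᶜ := by
      ext F; simp [not_or]
    rw [this]
    exact inter_mem_B (Kube_compl p) ih

/-- KEY LEMMA (freeness): if `b ∈ B` is above all `σ s`, `s ∈ S`, then it is above
`σ (sSup S)`. -/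
theorem key_lemma {S : Set L} {b : Set (X L)} (hb : b ∈ B L)
    (h : ∀ s ∈ S, sigma L s ⊆ b) : sigma L (sSup S) ⊆ b := by
  -- reduce to cubes of the complement
  obtain ⟨l, hl⟩ := compl_mem_B hb
  have cube : ∀ p ∈ l, sigma L (sSup S) ∩ Kube p = ∅ := by
    rintro ⟨x, ys⟩ hp
    set d : L := ys.foldr (· ⊔ ·) ⊥ with hd
    have hsx : ∀ s ∈ S, s ⊓ x ≤ d := by
      intro s hs
      refine sigma_le ?_
      rintro F hF
      rw [sigma_inf] at hF
      rw [hd, sigma_foldr]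
      by_contra hFd
      simp only [Set.mem_iUnion, not_exists] at hFd
      have : F ∈ Kube (L := L) (x, ys) := ⟨hF.2, by
        simp only [Set.mem_iInter, Set.mem_compl_iff]
        exact fun y hy => hFd y hy⟩
      have hFb : F ∈ b := h s hs hF.1
      have : F ∈ (∅ : Set (X L)) := by
        have hmem : F ∈ bᶜ := by
          rw [hl]
          exact Set.mem_biUnion hp this
        exact hmem hFb
      exact this.elim
    have hsupx : sSup S ⊓ x ≤ d := by
      rw [sSup_inf_eq]
      exact iSup₂_le fun s hs => hsx s hs
    -- now conclude
    ext F
    simp only [Set.mem_inter_iff, Set.mem_empty_iff_false, iff_false, not_and]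
    intro hFs hFK
    have hFx : F ∈ sigma L x := hFK.1
    have : F ∈ sigma L d := sigma_mono hsupx (by rw [sigma_inf]; exact ⟨hFs, hFx⟩)
    rw [hd, sigma_foldr] at this
    obtain ⟨y, hy, hFy⟩ := Set.mem_iUnion₂.mp this
    exact Set.mem_iInter₂.mp hFK.2 y hy hFy
  intro F hF
  by_contra hFb
  have : F ∈ bᶜ := hFb
  rw [hl] at this
  obtain ⟨p, hp, hFp⟩ := Set.mem_iUnion₂.mp this
  have := cube p hp
  rw [Set.eq_empty_iff_forall_notMem] at this
  exact this F ⟨hF, hFp⟩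

/-! ### The MacNeille completion of `B` by normal ideals -/

variable (L) in
/-- Elements of the Boolean algebra `B`. -/
def BB : Type u := {b : Set (X L) // b ∈ B L}

instance : PartialOrder (BB L) := Subtype.partialOrder _

theorem BB.le_iff {b c : BB L} : b ≤ c ↔ b.1 ⊆ c.1 := Iff.rfl

variable (L) in
def NIup (A : Set (BB L)) : Set (BB L) := {c | ∀ a ∈ A, a ≤ c}

variable (L) in
def NIlow (A : Set (BB L)) : Set (BB L) := {c | ∀ a ∈ A, c ≤ a}

theorem subset_lowup (A : Set (BB L)) : A ⊆ NIlow L (NIup L A) :=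
  fun a ha c hc => hc a ha

theorem lowup_mono {A C : Set (BB L)} (h : A ⊆ C) :
    NIlow L (NIup L A) ⊆ NIlow L (NIup L C) :=
  fun b hb c hc => hb c (fun a ha => hc a (h ha))

theorem lowup_idem (A : Set (BB L)) :
    NIlow L (NIup L (NIlow L (NIup L A))) ⊆ NIlow L (NIup L A) := by
  intro b hb c hc
  exact hb c (fun a ha => ha c hc)

variable (L) in
/-- Normal ideals of `B`: the MacNeille completion. -/
def NI : Type u := {I : Set (BB L) // NIlow L (NIup L I) ⊆ I}

instance : PartialOrder (NI L) := Subtype.partialOrder _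

theorem NI.le_iff {I J : NI L} : I ≤ J ↔ I.1 ⊆ J.1 := Iff.rfl

theorem NI.lowup_subset (I : NI L) : NIlow L (NIup L I.1) ⊆ I.1 := I.2

/-- Normal ideals are downward closed. -/
theorem NI.down (I : NI L) {b c : BB L} (hc : c ∈ I.1) (h : b ≤ c) : b ∈ I.1 :=
  I.2 (fun u hu => le_trans h (hu c hc))

/-- The bottom element of `BB`. -/
def botB : BB L := ⟨∅, empty_mem_B⟩

theorem botB_le (b : BB L) : (botB : BB L) ≤ b := Set.empty_subset _

theorem botB_mem (I : NI L) : (botB : BB L) ∈ I.1 :=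
  I.2 (fun u _ => botB_le u)

instance : InfSet (NI L) :=
  ⟨fun 𝒜 => ⟨⋂ I ∈ 𝒜, (I : NI L).1, by
    intro b hb
    refine Set.mem_iInter₂.mpr fun I hI => ?_
    exact I.2 (lowup_mono (Set.biInter_subset_of_mem hI) hb)⟩⟩

theorem NI.sInf_def (𝒜 : Set (NI L)) : (sInf 𝒜).1 = ⋂ I ∈ 𝒜, (I : NI L).1 := rfl

instance : CompleteLattice (NI L) :=
  completeLatticeOfInf _ (fun 𝒜 => by
    constructor
    · intro I hI
      rw [NI.le_iff, NI.sInf_def]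
      exact Set.biInter_subset_of_mem hI
    · intro J hJ
      rw [NI.le_iff, NI.sInf_def]
      exact Set.subset_iInter₂ fun I hI => hJ hI)

/-- Characterization of suprema in `NI`. -/
theorem NI.sSup_def (𝒜 : Set (NI L)) :
    (sSup 𝒜).1 = NIlow L (NIup L (⋃ I ∈ 𝒜, (I : NI L).1)) := by
  have hnorm : NIlow L (NIup L (NIlow L (NIup L (⋃ I ∈ 𝒜, (I : NI L).1)))) ⊆
      NIlow L (NIup L (⋃ I ∈ 𝒜, (I : NI L).1)) := lowup_idem _
  set N : NI L := ⟨NIlow L (NIup L (⋃ I ∈ 𝒜, (I : NI L).1)), hnorm⟩ with hN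
  have h1 : sSup 𝒜 ≤ N := by
    refine sSup_le fun I hI => ?_
    rw [NI.le_iff]
    exact (Set.subset_biUnion_of_mem hI).trans (subset_lowup _)
  have h2 : N ≤ sSup 𝒜 := by
    rw [NI.le_iff]
    intro b hb
    have : ∀ J : NI L, (∀ I ∈ 𝒜, I ≤ J) → b ∈ J.1 := by
      intro J hJ
      refine J.2 ?_
      intro u hu
      exact hb u (fun a ha => by
        obtain ⟨I, hI, haI⟩ := Set.mem_iUnion₂.mp ha
        exact hu a (hJ I hI haI))
    exact this (sSup 𝒜) (fun I hI => le_sSup hI)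
  exact le_antisymm (NI.le_iff.mp h1) (NI.le_iff.mp h2) |>.symm ▸ rfl

theorem NI.inf_def (I J : NI L) : (I ⊓ J).1 = I.1 ∩ J.1 := by
  have hnorm : NIlow L (NIup L (I.1 ∩ J.1)) ⊆ I.1 ∩ J.1 := by
    intro b hb
    exact ⟨I.2 (lowup_mono Set.inter_subset_left hb),
      J.2 (lowup_mono Set.inter_subset_right hb)⟩
  set C : NI L := ⟨I.1 ∩ J.1, hnorm⟩
  have h1 : I ⊓ J ≤ C := by
    rw [NI.le_iff]
    exact Set.subset_inter (NI.le_iff.mp inf_le_left) (NI.le_iff.mp inf_le_right)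
  have h2 : C ≤ I ⊓ J := le_inf (fun b hb => hb.1) (fun b hb => hb.2)
  exact le_antisymm (NI.le_iff.mp h1) (NI.le_iff.mp h2)

theorem NI.top_def : ((⊤ : NI L)).1 = Set.univ := by
  have hnorm : NIlow L (NIup L (Set.univ : Set (BB L))) ⊆ Set.univ := fun _ _ => trivial
  set U : NI L := ⟨Set.univ, hnorm⟩
  have : U ≤ ⊤ := le_top
  exact Set.eq_univ_of_univ_subset (NI.le_iff.mp this)

theorem NI.bot_def : ((⊥ : NI L)).1 = {botB} := by
  have hnorm : NIlow L (NIup L ({botB} : Set (BB L))) ⊆ {botB} := by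
    intro b hb
    have := hb botB (fun a ha => by rw [Set.mem_singleton_iff] at ha; rw [ha])
    exact Set.mem_singleton_iff.mpr (le_antisymm this (botB_le b))
  set Z : NI L := ⟨{botB}, hnorm⟩
  have h1 : (⊥ : NI L) ≤ Z := bot_le
  have h2 : Z ≤ ⊥ := by
    rw [NI.le_iff]
    intro b hb
    rw [Set.mem_singleton_iff] at hb
    rw [hb]
    exact botB_mem ⊥
  exact le_antisymm (NI.le_iff.mp h1) (NI.le_iff.mp h2)

/-- Complementation of normal ideals. -/
def NIcompl (I : NI L) : NI L :=
  ⟨{b | ∀ a ∈ I.1, a.1 ∩ b.1 = ∅}, by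
    intro b hb a ha
    have hups : (⟨a.1ᶜ, compl_mem_B a.2⟩ : BB L) ∈ NIup L {b | ∀ a ∈ I.1, a.1 ∩ b.1 = ∅} := by
      intro c hc
      apply BB.le_iff.mpr
      intro x hx
      have := hc a ha
      intro hxa
      rw [Set.eq_empty_iff_forall_notMem] at this
      exact this x ⟨hxa, hx⟩
    have hble : b ≤ ⟨a.1ᶜ, compl_mem_B a.2⟩ := hb _ hups
    rw [Set.eq_empty_iff_forall_notMem]
    rintro x ⟨hxa, hxb⟩
    exact hble hxb hxa⟩

theorem NI.inf_compl_bot (I : NI L) : I ⊓ NIcompl I ≤ ⊥ := by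
  rw [NI.le_iff, NI.inf_def, NI.bot_def]
  rintro b ⟨hbI, hbc⟩
  have : b.1 ∩ b.1 = ∅ := hbc b hbI
  rw [Set.inter_self] at this
  rw [Set.mem_singleton_iff]
  apply Subtype.ext
  exact this

theorem NI.sup_def (I J : NI L) : (I ⊔ J).1 = NIlow L (NIup L (I.1 ∪ J.1)) := by
  rw [← sSup_pair, NI.sSup_def]
  congr 1
  simp

theorem NI.top_le_sup_compl (I : NI L) : ⊤ ≤ I ⊔ NIcompl I := by
  rw [NI.le_iff, NI.top_def, NI.sup_def]
  intro b _
  intro u hu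
  have hcomplu : (⟨u.1ᶜ, compl_mem_B u.2⟩ : BB L) ∈ (NIcompl I).1 := by
    intro a ha
    have hau : a ≤ u := hu a (Or.inl ha)
    rw [Set.eq_empty_iff_forall_notMem]
    rintro x ⟨hxa, hxu⟩
    exact hxu (hau hxa)
  have : (⟨u.1ᶜ, compl_mem_B u.2⟩ : BB L) ≤ u := hu _ (Or.inr hcomplu)
  have huniv : u.1 = Set.univ := by
    rw [Set.eq_univ_iff_forall]
    intro x
    by_contra hx
    exact hx (this hx)
  apply BB.le_iff.mpr
  rw [huniv]
  exact Set.subset_univ _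

/-- The frame law for normal ideals. -/
theorem NI.frame_law (I : NI L) (𝒥 : Set (NI L)) :
    I ⊓ sSup 𝒥 ≤ sSup {K | ∃ J ∈ 𝒥, K = I ⊓ J} := by
  rw [NI.le_iff, NI.inf_def, NI.sSup_def, NI.sSup_def]
  rintro c ⟨hcI, hcS⟩
  intro u hu
  -- u is an upper bound of all I ⊓ J
  have hub : (⟨u.1 ∪ c.1ᶜ, union_mem_B u.2 (compl_mem_B c.2)⟩ : BB L) ∈
      NIup L (⋃ J ∈ 𝒥, (J : NI L).1) := by
    intro b hb
    obtain ⟨J, hJ, hbJ⟩ := Set.mem_iUnion₂.mp hb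
    have hcb : (⟨c.1 ∩ b.1, inter_mem_B c.2 b.2⟩ : BB L) ∈ (I ⊓ J).1 := by
      rw [NI.inf_def]
      exact ⟨I.down hcI Set.inter_subset_left, J.down hbJ Set.inter_subset_right⟩
    have : (⟨c.1 ∩ b.1, inter_mem_B c.2 b.2⟩ : BB L) ≤ u := by
      refine hu _ (Set.mem_iUnion₂.mpr ⟨I ⊓ J, ⟨J, hJ, rfl⟩, hcb⟩)
    apply BB.le_iff.mpr
    intro x hxb
    by_cases hxc : x ∈ c.1
    · exact Or.inl (this ⟨hxc, hxb⟩)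
    · exact Or.inr hxc
  have hcu : c ≤ ⟨u.1 ∪ c.1ᶜ, union_mem_B u.2 (compl_mem_B c.2)⟩ := hcS _ hub
  apply BB.le_iff.mpr
  intro x hxc
  rcases hcu hxc with h | h
  · exact h
  · exact absurd hxc h

theorem NI.inf_sup_le (I J K : NI L) : I ⊓ (J ⊔ K) ≤ (I ⊓ J) ⊔ (I ⊓ K) := by
  have h := NI.frame_law I {J, K}
  rw [sSup_pair] at h
  refine h.trans (sSup_le ?_)
  rintro K' ⟨J', hJ', rfl⟩
  rcases hJ' with rfl | hJ'
  · exact le_sup_left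
  · rw [Set.mem_singleton_iff] at hJ'
    subst hJ'
    exact le_sup_right

theorem NI.le_sup_inf' (I J K : NI L) : (I ⊔ J) ⊓ (I ⊔ K) ≤ I ⊔ J ⊓ K := by
  have h1 : (I ⊔ J) ⊓ (I ⊔ K) ≤ ((I ⊔ J) ⊓ I) ⊔ ((I ⊔ J) ⊓ K) := NI.inf_sup_le ..
  refine h1.trans (sup_le (le_sup_of_le_left inf_le_right) ?_)
  have h2 : (I ⊔ J) ⊓ K ≤ (K ⊓ I) ⊔ (K ⊓ J) := by
    rw [inf_comm]
    exact NI.inf_sup_le ..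
  refine h2.trans (sup_le (le_sup_of_le_left inf_le_right) (le_sup_of_le_right ?_))
  rw [inf_comm]

theorem NI.coframe_law (I : NI L) (s : Set (NI L)) :
    ⨅ J ∈ s, I ⊔ J ≤ I ⊔ sInf s := by
  set c := ⨅ J ∈ s, I ⊔ J with hc
  have hstep : c ≤ (c ⊓ I) ⊔ (c ⊓ NIcompl I) :=
    calc c = c ⊓ ⊤ := (inf_top_eq c).symm
      _ ≤ c ⊓ (I ⊔ NIcompl I) := inf_le_inf_left c (le_top.trans (NI.top_le_sup_compl I))
      _ ≤ (c ⊓ I) ⊔ (c ⊓ NIcompl I) := NI.inf_sup_le ..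
  have h2 : c ⊓ NIcompl I ≤ sInf s := by
    refine le_sInf fun J hJ => ?_
    have hcIJ : c ≤ I ⊔ J := iInf₂_le J hJ
    calc c ⊓ NIcompl I ≤ (I ⊔ J) ⊓ NIcompl I := inf_le_inf_right _ hcIJ
      _ ≤ (NIcompl I ⊓ I) ⊔ (NIcompl I ⊓ J) := by
          rw [inf_comm]
          exact NI.inf_sup_le ..
      _ ≤ J := sup_le ((inf_comm (NIcompl I) I ▸ NI.inf_compl_bot I).trans bot_le)
          inf_le_right
  exact hstep.trans (sup_le (le_sup_of_le_left inf_le_right) (le_sup_of_le_right h2))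

instance : CompleteBooleanAlgebra (NI L) :=
  { (inferInstance : CompleteLattice (NI L)) with
    compl := NIcompl
    le_sup_inf := NI.le_sup_inf'
    inf_compl_le_bot := NI.inf_compl_bot
    top_le_sup_compl := NI.top_le_sup_compl
    sdiff := fun I J => I ⊓ NIcompl J
    himp := fun I J => J ⊔ NIcompl I
    sdiff_eq := fun _ _ => rfl
    himp_eq := fun _ _ => rfl }

/-! ### The embedding of `L` into `NI L` -/

variable (L) in
/-- The embedding `e : L → NI L`. -/
def e (a : L) : NI L :=
  ⟨{b | b.1 ⊆ sigma L a}, by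
    intro b hb
    exact hb ⟨sigma L a, sigma_mem_B a⟩ (fun c hc => hc)⟩

theorem e_mono {a b : L} (h : a ≤ b) : e L a ≤ e L b :=
  fun _ hc => hc.trans (sigma_mono h)

theorem e_le_e {a b : L} : e L a ≤ e L b ↔ a ≤ b := by
  refine ⟨fun h => ?_, e_mono⟩
  have : (⟨sigma L a, sigma_mem_B a⟩ : BB L) ∈ (e L a).1 :=
    show sigma L a ⊆ sigma L a from subset_rfl
  exact sigma_le (h this)

theorem e_top : e L ⊤ = ⊤ := by
  apply Subtype.ext
  rw [NI.top_def]
  refine Set.eq_univ_of_forall fun b => ?_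
  show b.1 ⊆ sigma L ⊤
  rw [sigma_top]
  exact Set.subset_univ _

theorem e_inf (a b : L) : e L (a ⊓ b) = e L a ⊓ e L b := by
  apply Subtype.ext
  rw [NI.inf_def]
  ext c
  show c.1 ⊆ sigma L (a ⊓ b) ↔ _
  rw [sigma_inf]
  exact ⟨fun h => ⟨h.trans Set.inter_subset_left, h.trans Set.inter_subset_right⟩,
    fun ⟨h1, h2⟩ => Set.subset_inter h1 h2⟩

theorem e_sSup (S : Set L) : e L (sSup S) = sSup (e L '' S) := by
  apply Subtype.ext
  rw [NI.sSup_def]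
  ext b
  constructor
  · intro hb u hu
    have hkey : ∀ s ∈ S, sigma L s ⊆ u.1 := by
      intro s hs
      have hmem : (⟨sigma L s, sigma_mem_B s⟩ : BB L) ∈ ⋃ I ∈ e L '' S, (I : NI L).1 :=
        Set.mem_iUnion₂.mpr ⟨e L s, ⟨s, hs, rfl⟩, show sigma L s ⊆ sigma L s from subset_rfl⟩
      exact hu _ hmem
    have := key_lemma u.2 hkey
    exact Set.Subset.trans (hb : b.1 ⊆ sigma L (sSup S)) this
  · intro hb
    have hup : (⟨sigma L (sSup S), sigma_mem_B _⟩ : BB L) ∈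
        NIup L (⋃ I ∈ e L '' S, (I : NI L).1) := by
      rintro c hc
      obtain ⟨I, ⟨s, hs, rfl⟩, hcI⟩ := Set.mem_iUnion₂.mp hc
      exact Set.Subset.trans (hcI : c.1 ⊆ sigma L s) (sigma_mono (le_sSup hs))
    exact hb _ hup

variable (L) in
/-- The interior operator on `NI L`. -/
def boxNI (I : NI L) : NI L := e L (sSup {a | e L a ≤ I})

theorem boxNI_le (I : NI L) : boxNI L I ≤ I := by
  rw [boxNI, e_sSup]
  refine sSup_le ?_
  rintro J ⟨a, ha, rfl⟩
  exact ha

theorem le_boxNI {a : L} {I : NI L} (h : e L a ≤ I) : e L a ≤ boxNI L I :=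
  e_mono (le_sSup h)

theorem boxNI_top : boxNI L ⊤ = ⊤ := by
  refine le_antisymm le_top ?_
  have : e L ⊤ ≤ boxNI L ⊤ := le_boxNI (by rw [e_top])
  rwa [e_top] at this

theorem boxNI_idem (I : NI L) : boxNI L I ≤ boxNI L (boxNI L I) :=
  le_boxNI le_rfl

theorem boxNI_mono {I J : NI L} (h : I ≤ J) : boxNI L I ≤ boxNI L J :=
  e_mono (sSup_le_sSup fun a (ha : e L a ≤ I) => ha.trans h)

theorem boxNI_inf (I J : NI L) : boxNI L (I ⊓ J) = boxNI L I ⊓ boxNI L J := by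
  refine le_antisymm (le_inf (boxNI_mono inf_le_left) (boxNI_mono inf_le_right)) ?_
  have hIJ : boxNI L I ⊓ boxNI L J = e L (sSup {a | e L a ≤ I} ⊓ sSup {a | e L a ≤ J}) := by
    rw [e_inf]; rfl
  rw [hIJ]
  refine le_boxNI ?_
  rw [e_inf]
  exact inf_le_inf (boxNI_le I) (boxNI_le J)

theorem boxNI_e (a : L) : boxNI L (e L a) = e L a :=
  le_antisymm (boxNI_le _) (le_boxNI le_rfl)

theorem boxNI_fixed {I : NI L} (h : boxNI L I = I) : ∃ a : L, e L a = I :=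
  ⟨sSup {a | e L a ≤ I}, h⟩

end Funayama

/-- for every frame `L` there exist a complete Boolean algebra `M` and an
interior operator `□` on `M` such that `O(M)` is order-isomorphic to `L`. -/

theorem statement1 (L : Type u) [Order.Frame L] :
    ∃ (M : Type u) (inst : CompleteBooleanAlgebra M) (T : @MTAlg M inst),
      @RealizesFrame L _ M inst T := by
  classical
  refine ⟨Funayama.NI L, inferInstance,
    { box := Funayama.boxNI L
      box_top := Funayama.boxNI_top
      box_inf := Funayama.boxNI_inf
      box_le := Funayama.boxNI_le
      box_idem := Funayama.boxNI_idem }, ⟨?_⟩⟩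
  refine
    { toFun := fun a => ⟨Funayama.e L a, Funayama.boxNI_e a⟩
      invFun := fun I => sSup {a | Funayama.e L a ≤ I.1}
      left_inv := fun a => le_antisymm (sSup_le fun b hb => Funayama.e_le_e.mp hb)
        (le_sSup (show Funayama.e L a ≤ Funayama.e L a from le_rfl))
      right_inv := fun I => Subtype.ext ?_
      map_rel_iff' := Funayama.e_le_e }
  exact I.2
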